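/- Every HRLQ instance that admits a feasible matching admits a feasible relaxed stable matching. -/

import Mathlib

/-- An HRLQ instance: bipartite graph on residents `R` and hospitals `H` with
strict preferences encoded as rank functions (lower rank = more preferred)
and lower/upper quotas per hospital. -/
structure HRLQ (R H : Type) where
  E : R → H → Prop
  rPref : R → H → ℕ
  hPref : H → R → ℕ
  lq : H → ℕ
  uq : H → ℕ

namespace HRLQ

variable {R H : Type}

/-- residents matched to hospital `h` -/
def matchedTo (M : R → Option H) (h : H) : Set R := {r | M r = some h}

/-- size of a matching -/
noncomputable def msize (M : R → Option H) : ℕ := {r | M r ≠ none}.ncard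

variable (I : HRLQ R H)

/-- resident `r` strictly prefers hospital `h` to assignment `o`
    (being unmatched is least preferred); `h` must be acceptable to `r`. -/
def PrefersH (r : R) (h : H) (o : Option H) : Prop :=
  I.E r h ∧ ∀ h', o = some h' → I.rPref r h < I.rPref r h'

def IsMatching (M : R → Option H) : Prop :=
  (∀ r h, M r = some h → I.E r h) ∧ ∀ h, (matchedTo M h).ncard ≤ I.uq h

def Feasible (M : R → Option H) : Prop :=
  ∀ h, I.lq h ≤ (matchedTo M h).ncard

def Blocks (M : R → Option H) (r : R) (h : H) : Prop :=
  I.E r h ∧ M r ≠ some h ∧ I.PrefersH r h (M r) ∧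
    ((matchedTo M h).ncard < I.uq h ∨ ∃ r' ∈ matchedTo M h, I.hPref h r < I.hPref h r')

def Stable (M : R → Option H) : Prop := ∀ r h, ¬ I.Blocks M r h

def Envies (M : R → Option H) (r r' : R) : Prop :=
  ∃ h, M r' = some h ∧ I.PrefersH r h (M r) ∧ I.hPref h r < I.hPref h r'

def EnvyFree (M : R → Option H) : Prop := ∀ r r', ¬ I.Envies M r r'

def RelaxedStable (M : R → Option H) : Prop :=
  (∀ h, {r | r ∈ matchedTo M h ∧ ∃ h', I.Blocks M r h'}.ncard ≤ I.lq h) ∧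
  ∀ r, M r = none → ∀ h, ¬ I.Blocks M r h

/-- preferences are strict -/
def StrictPrefs : Prop :=
  (∀ r, Function.Injective (I.rPref r)) ∧ ∀ h, Function.Injective (I.hPref h)

end HRLQ

-- ===== auxiliary development =====

namespace HRLQ

attribute [local instance] Classical.propDecidable

variable {R H : Type}

/-- pick a most-preferred hospital for `r` from `s` -/
noncomputable def pick (I : HRLQ R H) (r : R) (s : Finset H) : Option H :=
  if hne : s.Nonempty then some (s.exists_min_image (I.rPref r) hne).choose else none

lemma pick_spec {I : HRLQ R H} {r : R} {s : Finset H} {h : H}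
    (hp : I.pick r s = some h) : h ∈ s ∧ ∀ h' ∈ s, I.rPref r h ≤ I.rPref r h' := by
  unfold pick at hp
  split at hp
  case isTrue hne =>
    obtain rfl : _ = h := Option.some.inj hp
    exact (s.exists_min_image (I.rPref r) hne).choose_spec
  case isFalse => exact absurd hp (by simp)

lemma pick_some {I : HRLQ R H} {r : R} {s : Finset H} (hne : s.Nonempty) :
    ∃ h, I.pick r s = some h := by
  unfold pick
  rw [dif_pos hne]
  exact ⟨_, rfl⟩

variable [Fintype R] [Fintype H]

noncomputable def gsPool (I : HRLQ R H) (A : R → Finset H) (h : H) : Finset R :=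
  Finset.univ.filter (fun r => I.pick r (A r) = some h)

def gsInv (I : HRLQ R H) (A : R → Finset H) : Prop :=
  (∀ r h, h ∈ A r → I.E r h) ∧
  ∀ r h, I.E r h → h ∉ A r →
    I.uq h ≤ ((I.gsPool A h).filter (fun r' => I.hPref h r' < I.hPref h r)).card

lemma gs_aux (I : HRLQ R H) (hstrict : I.StrictPrefs) :
    ∀ n (A : R → Finset H), (∑ r, (A r).card) = n → I.gsInv A →
    ∃ M, I.IsMatching M ∧ I.Stable M := by
  intro n
  induction n using Nat.strong_induction_on with
  | _ n ih =>
  intro A hsum hinv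
  by_cases hcap : ∀ h, (I.gsPool A h).card ≤ I.uq h
  · -- terminal state: the tentative matching is stable
    set M : R → Option H := fun r => I.pick r (A r) with hM
    have key : ∀ h, matchedTo M h = ↑(I.gsPool A h) := by
      intro h; ext r
      simp [matchedTo, gsPool, hM]
    have hcard : ∀ h, (matchedTo M h).ncard = (I.gsPool A h).card := by
      intro h; rw [key, Set.ncard_coe_finset]
    refine ⟨M, ⟨?_, ?_⟩, ?_⟩
    · intro r h hMr
      exact hinv.1 r h (pick_spec hMr).1
    · intro h; rw [hcard]; exact hcap h
    · intro r h hb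
      obtain ⟨hE, hne, ⟨_, hpref⟩, hcase⟩ := hb
      by_cases hmem : h ∈ A r
      · have hner : (A r).Nonempty := ⟨h, hmem⟩
        obtain ⟨h0, hh0⟩ := pick_some (I := I) (r := r) hner
        have h1 : I.rPref r h < I.rPref r h0 := hpref h0 hh0
        have h2 : I.rPref r h0 ≤ I.rPref r h := (pick_spec hh0).2 h hmem
        omega
      · have hold := hinv.2 r h hE hmem
        have hsub : ((I.gsPool A h).filter (fun r' => I.hPref h r' < I.hPref h r))
            ⊆ I.gsPool A h := Finset.filter_subset _ _
        have hall : ((I.gsPool A h).filter (fun r' => I.hPref h r' < I.hPref h r))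
            = I.gsPool A h :=
          Finset.eq_of_subset_of_card_le hsub (le_trans (hcap h) hold)
        rcases hcase with hlt | ⟨r', hr'm, hσ⟩
        · rw [hcard] at hlt
          have := Finset.card_le_card hsub
          omega
        · have : r' ∈ I.gsPool A h := by rw [key] at hr'm; exact_mod_cast hr'm
          rw [← hall] at this
          have := (Finset.mem_filter.mp this).2
          omega
  · -- some hospital is over capacity: reject its worst proposer
    push_neg at hcap
    obtain ⟨h0, hover⟩ := hcap
    have hne : (I.gsPool A h0).Nonempty := Finset.card_pos.mp (by omega)
    obtain ⟨w, hwP, hwmax⟩ := (I.gsPool A h0).exists_max_image (I.hPref h0) hne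
    have hw_top : I.pick w (A w) = some h0 := (Finset.mem_filter.mp hwP).2
    have hh0mem : h0 ∈ A w := (pick_spec hw_top).1
    set A' : R → Finset H := Function.update A w ((A w).erase h0) with hA'def
    have hA'w : A' w = (A w).erase h0 := Function.update_self _ _ _
    have hA'r : ∀ r, r ≠ w → A' r = A r := fun r hr => Function.update_of_ne hr _ _
    have hsum' : ∑ r, (A' r).card < n := by
      rw [← hsum]
      apply Finset.sum_lt_sum
      · intro i _
        by_cases hi : i = w
        · subst hi; rw [hA'w]; exact Finset.card_le_card (Finset.erase_subset _ _)
        · rw [hA'r i hi]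
      · exact ⟨w, Finset.mem_univ w, by
          rw [hA'w]; exact Finset.card_erase_lt_of_mem hh0mem⟩
    have hpool_ne : ∀ h, h ≠ h0 → I.gsPool A h ⊆ I.gsPool A' h := by
      intro h hne' r hr
      simp only [gsPool, Finset.mem_filter, Finset.mem_univ, true_and] at hr ⊢
      have hrw : r ≠ w := by
        rintro rfl
        rw [hw_top] at hr
        exact hne' (Option.some.inj hr).symm
      rw [hA'r r hrw]; exact hr
    have hpool_h0 : I.gsPool A' h0 = (I.gsPool A h0).erase w := by
      ext r
      simp only [gsPool, Finset.mem_filter, Finset.mem_univ, true_and, Finset.mem_erase]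
      by_cases hrw : r = w
      · subst hrw
        constructor
        · intro hp
          exact absurd ((pick_spec (hA'w ▸ hp)).1) (Finset.notMem_erase _ _)
        · rintro ⟨hne', _⟩; exact absurd rfl hne'
      · rw [hA'r r hrw]
        exact ⟨fun hp => ⟨hrw, hp⟩, fun h => h.2⟩
    refine ih _ hsum' A' rfl ⟨?_, ?_⟩
    · intro r h hmem
      by_cases hrw : r = w
      · subst hrw
        rw [hA'w] at hmem
        exact hinv.1 r h (Finset.erase_subset _ _ hmem)
      · rw [hA'r r hrw] at hmem
        exact hinv.1 r h hmem
    · intro r h hE hnot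
      by_cases hh : h = h0
      · subst hh
        by_cases hrw : r = w
        · subst hrw
          -- newly rejected pair (w, h0)
          have hallbetter : ∀ r' ∈ I.gsPool A' h, I.hPref h r' < I.hPref h r := by
            intro r' hr'
            rw [hpool_h0] at hr'
            obtain ⟨hne', hmem'⟩ := Finset.mem_erase.mp hr'
            exact lt_of_le_of_ne (hwmax r' hmem') (fun heq => hne' (hstrict.2 h heq))
          rw [Finset.filter_true_of_mem hallbetter, hpool_h0,
            Finset.card_erase_of_mem hwP]
          omega
        · have hnotA : h ∉ A r := by rwa [hA'r r hrw] at hnot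
          have hold := hinv.2 r h hE hnotA
          rw [hpool_h0, Finset.filter_erase]
          set B := (I.gsPool A h).filter (fun r' => I.hPref h r' < I.hPref h r) with hB
          by_cases hwB : w ∈ B
          · have hallB : I.gsPool A h ⊆ B := by
              intro p hp
              rw [hB]
              exact Finset.mem_filter.mpr
                ⟨hp, lt_of_le_of_lt (hwmax p hp) (Finset.mem_filter.mp hwB).2⟩
            have hcB : (I.gsPool A h).card ≤ B.card := Finset.card_le_card hallB
            rw [Finset.card_erase_of_mem hwB]
            omega
          · rw [Finset.erase_eq_of_notMem hwB]
            exact hold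
      · have hnotA : h ∉ A r := by
          by_cases hrw : r = w
          · subst hrw
            rw [hA'w] at hnot
            intro hc
            exact hnot (Finset.mem_erase.mpr ⟨hh, hc⟩)
          · rwa [hA'r r hrw] at hnot
        have hold := hinv.2 r h hE hnotA
        exact le_trans hold (Finset.card_le_card
          (Finset.filter_subset_filter _ (hpool_ne h hh)))

/-- Gale–Shapley: a stable matching (w.r.t. upper quotas) always exists. -/
lemma exists_stable (I : HRLQ R H) (hstrict : I.StrictPrefs) :
    ∃ M, I.IsMatching M ∧ I.Stable M :=
  gs_aux I hstrict _ (fun r => Finset.univ.filter (I.E r)) rfl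
    ⟨fun r h hm => (Finset.mem_filter.mp hm).2,
     fun r h hE hn => absurd (Finset.mem_filter.mpr ⟨Finset.mem_univ _, hE⟩) hn⟩


noncomputable def bigK (I : HRLQ R H) : ℕ :=
  1 + Finset.univ.sup fun h => Finset.univ.sup fun r => I.hPref h r

lemma hPref_lt_bigK (I : HRLQ R H) (h : H) (r : R) : I.hPref h r < I.bigK := by
  have h1 : I.hPref h r ≤ Finset.univ.sup fun r => I.hPref h r :=
    Finset.le_sup (Finset.mem_univ r)
  have h2 : (Finset.univ.sup fun r => I.hPref h r) ≤
      Finset.univ.sup fun h => Finset.univ.sup fun r => I.hPref h r :=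
    Finset.le_sup (f := fun h => Finset.univ.sup fun r => I.hPref h r) (Finset.mem_univ h)
  unfold bigK
  omega

/-- auxiliary instance: residents matched in `M0` accept only their `M0`-hospital,
and are moved to the top of its preference list. -/
noncomputable def lowerInst (I : HRLQ R H) (M0 : R → Option H) : HRLQ R H where
  E r h := M0 r = some h ∨ (M0 r = none ∧ I.E r h)
  rPref := I.rPref
  hPref h r := if M0 r = some h then I.hPref h r else I.hPref h r + I.bigK
  lq := I.lq
  uq := I.uq

lemma lowerInst_strict (I : HRLQ R H) (M0 : R → Option H) (hstrict : I.StrictPrefs) :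
    (I.lowerInst M0).StrictPrefs := by
  refine ⟨hstrict.1, fun h r1 r2 heq => ?_⟩
  have k1 := I.hPref_lt_bigK h r1
  have k2 := I.hPref_lt_bigK h r2
  simp only [lowerInst] at heq
  split_ifs at heq
  · exact hstrict.2 h heq
  · omega
  · omega
  · exact hstrict.2 h (by omega)

section Lower

variable {I : HRLQ R H} {M0 : R → Option H} {M' : R → Option H}

lemma lower_matched (hlu : ∀ h, I.lq h ≤ I.uq h)
    (hcard : ∀ h, (matchedTo M0 h).ncard = I.lq h)
    (hmatch : (I.lowerInst M0).IsMatching M')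
    (hst : (I.lowerInst M0).Stable M') :
    ∀ r h0, M0 r = some h0 → M' r = some h0 := by
  intro r h0 hr0
  rcases hMr : M' r with _ | h'
  case some =>
    rcases hmatch.1 r h' hMr with hc | ⟨hc, _⟩
    · rw [hr0] at hc
      exact hc.symm
    · rw [hc] at hr0
      cases hr0
  case none =>
    exfalso
    apply hst r h0
    refine ⟨Or.inl hr0, by simp [hMr], ⟨Or.inl hr0, ?_⟩, ?_⟩
    · intro h' hh'; rw [hMr] at hh'; cases hh'
    · by_cases hlt : (matchedTo M' h0).ncard < (I.lowerInst M0).uq h0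
      · exact Or.inl hlt
      · right
        have huq : (I.lowerInst M0).uq h0 = I.uq h0 := rfl
        rw [huq] at hlt
        have h1 : I.lq h0 ≤ (matchedTo M' h0).ncard := le_trans (hlu h0) (not_lt.mp hlt)
        have h2 : ¬ (matchedTo M' h0 ⊆ matchedTo M0 h0 \ {r}) := by
          intro hsub
          have h3 := Set.ncard_le_ncard hsub (Set.toFinite _)
          have h4 : (matchedTo M0 h0 \ {r}).ncard < (matchedTo M0 h0).ncard :=
            Set.ncard_diff_singleton_lt_of_mem hr0 (Set.toFinite _)
          rw [hcard] at h4
          omega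
        obtain ⟨r'', hr''M', hr''⟩ := Set.not_subset.mp h2
        have hr''r : r'' ≠ r := by
          rintro rfl
          simp only [matchedTo, Set.mem_setOf_eq, hMr] at hr''M'
          cases hr''M'
        have hr''ne : M0 r'' ≠ some h0 := by
          intro hc
          exact hr'' ⟨hc, hr''r⟩
        refine ⟨r'', hr''M', ?_⟩
        have k := I.hPref_lt_bigK h0 r
        show (if M0 r = some h0 then I.hPref h0 r else I.hPref h0 r + I.bigK) <
          (if M0 r'' = some h0 then I.hPref h0 r'' else I.hPref h0 r'' + I.bigK)
        rw [if_pos hr0, if_neg hr''ne]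
        omega

lemma blocks_transfer (hlu : ∀ h, I.lq h ≤ I.uq h)
    (hcard : ∀ h, (matchedTo M0 h).ncard = I.lq h)
    (hmatch : (I.lowerInst M0).IsMatching M')
    (hst : (I.lowerInst M0).Stable M') :
    ∀ r h, M0 r = none → I.Blocks M' r h →
      ∃ r', M0 r' = some h ∧ I.hPref h r < I.hPref h r' := by
  intro r h hr0 hb
  obtain ⟨hE, hne, hpref, hcase⟩ := hb
  have hE' : (I.lowerInst M0).E r h := Or.inr ⟨hr0, hE⟩
  have hpref' : (I.lowerInst M0).PrefersH r h (M' r) := ⟨hE', hpref.2⟩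
  rcases hcase with hlt | ⟨r', hr'm, hσ⟩
  · exact absurd ⟨hE', hne, hpref', Or.inl hlt⟩ (hst r h)
  · rcases hM0r' : M0 r' with _ | h1
    · exfalso
      apply hst r h
      refine ⟨hE', hne, hpref', Or.inr ⟨r', hr'm, ?_⟩⟩
      show (if M0 r = some h then I.hPref h r else I.hPref h r + I.bigK) <
        (if M0 r' = some h then I.hPref h r' else I.hPref h r' + I.bigK)
      rw [if_neg (by rw [hr0]; simp), if_neg (by rw [hM0r']; simp)]
      omega
    · have hh1 : h1 = h := by
        have h2 := lower_matched hlu hcard hmatch hst r' h1 hM0r'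
        simp only [matchedTo, Set.mem_setOf_eq] at hr'm
        rw [hr'm] at h2
        exact (Option.some.inj h2).symm
      exact ⟨r', hh1 ▸ hM0r', hσ⟩

end Lower

noncomputable def phi (I : HRLQ R H) (M0 : R → Option H) : ℕ :=
  ∑ r, (M0 r).elim 0 (fun h => I.hPref h r)

lemma main_aux (I : HRLQ R H) (hstrict : I.StrictPrefs)
    (hlu : ∀ h, I.lq h ≤ I.uq h) :
    ∀ n (M0 : R → Option H), (∀ r h, M0 r = some h → I.E r h) →
      (∀ h, (matchedTo M0 h).ncard = I.lq h) → I.phi M0 = n →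
      ∃ M, I.IsMatching M ∧ I.Feasible M ∧ I.RelaxedStable M := by
  intro n
  induction n using Nat.strong_induction_on with
  | _ n ih =>
  intro M0 hE0 hcard hphi
  obtain ⟨M', hM'match, hM'stable⟩ :=
    (I.lowerInst M0).exists_stable (I.lowerInst_strict M0 hstrict)
  have hlow : ∀ r h0, M0 r = some h0 → M' r = some h0 :=
    lower_matched hlu hcard hM'match hM'stable
  have hmatchI : I.IsMatching M' := by
    constructor
    · intro r h hm
      rcases hM'match.1 r h hm with h1 | h2
      · exact hE0 r h h1
      · exact h2.2
    · exact hM'match.2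
  have hfeasI : I.Feasible M' := by
    intro h
    rw [← hcard h]
    exact Set.ncard_le_ncard (fun r hr => hlow r h hr) (Set.toFinite _)
  by_cases hblk : ∃ r h, M0 r = none ∧ I.Blocks M' r h
  · obtain ⟨r, h, hr0, hb⟩ := hblk
    obtain ⟨r', hM0r', hσ⟩ := blocks_transfer hlu hcard hM'match hM'stable r h hr0 hb
    have hrne : r' ≠ r := fun he => by rw [he, hr0] at hM0r'; cases hM0r'
    set M0'' : R → Option H :=
      fun x => if x = r then some h else if x = r' then none else M0 x with hM0''
    have hE0'' : ∀ x g, M0'' x = some g → I.E x g := by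
      intro x g hx
      by_cases h1 : x = r
      · simp only [hM0'', if_pos h1] at hx
        subst h1
        rw [← Option.some.inj hx]
        exact hb.1
      · simp only [hM0'', if_neg h1] at hx
        by_cases h2 : x = r'
        · rw [if_pos h2] at hx; cases hx
        · rw [if_neg h2] at hx; exact hE0 x g hx
    have hmt_h : matchedTo M0'' h = insert r (matchedTo M0 h \ {r'}) := by
      ext x
      simp only [matchedTo, Set.mem_setOf_eq, Set.mem_insert_iff, Set.mem_diff,
        Set.mem_singleton_iff, hM0'']
      by_cases h1 : x = r
      · simp [h1]
      · by_cases h2 : x = r'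
        · simp [h1, h2, Ne.symm hrne]
        · simp [h1, h2]
    have hmt_ne : ∀ g, g ≠ h → matchedTo M0'' g = matchedTo M0 g := by
      intro g hg
      ext x
      simp only [matchedTo, Set.mem_setOf_eq, hM0'']
      by_cases h1 : x = r
      · simp [h1, hr0, Ne.symm hg]
      · by_cases h2 : x = r'
        · simp [h1, h2, hM0r', Ne.symm hg, hg]
        · simp [h1, h2]
    have hcard'' : ∀ g, (matchedTo M0'' g).ncard = I.lq g := by
      intro g
      by_cases hg : g = h
      · subst hg
        rw [hmt_h]
        have hrmem : r ∉ matchedTo M0 g \ {r'} := by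
          rintro ⟨hc, -⟩
          simp only [matchedTo, Set.mem_setOf_eq, hr0] at hc
          cases hc
        have hr'mem : r' ∈ matchedTo M0 g := hM0r'
        rw [Set.ncard_insert_of_notMem hrmem (Set.toFinite _),
          Set.ncard_diff_singleton_of_mem hr'mem, hcard]
        have hpos : 0 < I.lq g := by
          rw [← hcard g]
          exact (Set.ncard_pos (Set.toFinite _)).mpr ⟨r', hr'mem⟩
        omega
      · rw [hmt_ne g hg, hcard]
    have hphi'' : I.phi M0'' < n := by
      have hr'u : r' ∈ Finset.univ.erase r :=
        Finset.mem_erase.mpr ⟨hrne, Finset.mem_univ r'⟩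
      have e1 : ∀ (f : R → ℕ), ∑ x, f x =
          f r + (f r' + ∑ x ∈ (Finset.univ.erase r).erase r', f x) := by
        intro f
        rw [Finset.add_sum_erase _ f hr'u, Finset.add_sum_erase _ f (Finset.mem_univ r)]
      have hrest : ∑ x ∈ (Finset.univ.erase r).erase r', (M0'' x).elim 0 (fun g => I.hPref g x)
          = ∑ x ∈ (Finset.univ.erase r).erase r', (M0 x).elim 0 (fun g => I.hPref g x) := by
        apply Finset.sum_congr rfl
        intro x hx
        have hx1 := Finset.mem_erase.mp hx
        have hx2 := Finset.mem_erase.mp hx1.2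
        simp only [hM0'', if_neg hx2.1, if_neg hx1.1]
      have hv1 : (M0'' r).elim 0 (fun g => I.hPref g r) = I.hPref h r := by
        simp [hM0'']
      have hv2 : (M0'' r').elim 0 (fun g => I.hPref g r') = 0 := by
        simp [hM0'', hrne]
      have hv3 : (M0 r).elim 0 (fun g => I.hPref g r) = 0 := by rw [hr0]; rfl
      have hv4 : (M0 r').elim 0 (fun g => I.hPref g r') = I.hPref h r' := by
        rw [hM0r']; rfl
      have heq1 : I.phi M0'' =
          I.hPref h r + (0 + ∑ x ∈ (Finset.univ.erase r).erase r',
            (M0 x).elim 0 (fun g => I.hPref g x)) := by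
        rw [phi, e1, hv1, hv2, hrest]
      have heq2 : I.phi M0 =
          0 + (I.hPref h r' + ∑ x ∈ (Finset.univ.erase r).erase r',
            (M0 x).elim 0 (fun g => I.hPref g x)) := by
        rw [phi, e1, hv3, hv4]
      omega
    exact ih _ hphi'' M0'' hE0'' hcard'' rfl
  · push_neg at hblk
    refine ⟨M', hmatchI, hfeasI, ?_, ?_⟩
    · intro h
      have hsub : {r | r ∈ matchedTo M' h ∧ ∃ h', I.Blocks M' r h'} ⊆ matchedTo M0 h := by
        rintro r ⟨hrm, h', hb⟩
        rcases hM0r : M0 r with _ | h1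
        · exact absurd hb (hblk r h' hM0r)
        · have h2 := hlow r h1 hM0r
          simp only [matchedTo, Set.mem_setOf_eq] at hrm ⊢
          rw [hrm] at h2
          have h3 : h1 = h := (Option.some.inj h2).symm
          rw [hM0r, h3]
      calc {r | r ∈ matchedTo M' h ∧ ∃ h', I.Blocks M' r h'}.ncard
          ≤ (matchedTo M0 h).ncard := Set.ncard_le_ncard hsub (Set.toFinite _)
        _ = I.lq h := hcard h
    · intro r hrnone h
      rcases hM0r : M0 r with _ | h1
      · exact hblk r h hM0r
      · have h2 := hlow r h1 hM0r
        rw [hrnone] at h2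
        cases h2



end HRLQ

/-- Every HRLQ instance admitting a feasible matching
admits a feasible relaxed stable matching. -/
theorem exists_feasible_relaxed_stable
    {R H : Type} [Fintype R] [Fintype H] (I : HRLQ R H)
    (hstrict : I.StrictPrefs)
    (hfeas : ∃ M, I.IsMatching M ∧ I.Feasible M) :
    ∃ M, I.IsMatching M ∧ I.Feasible M ∧ I.RelaxedStable M := by
  classical
  obtain ⟨Mf, hMfmatch, hMffeas⟩ := hfeas
  have hlu : ∀ h, I.lq h ≤ I.uq h := fun h => le_trans (hMffeas h) (hMfmatch.2 h)
  choose S hS1 hS2 using fun h => Set.exists_subset_card_eq (hMffeas h)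
  set M0 : R → Option H :=
    fun r => (Mf r).bind (fun h => if r ∈ S h then some h else none) with hM0
  have hmt : ∀ h, HRLQ.matchedTo M0 h = S h := by
    intro h
    ext r
    simp only [HRLQ.matchedTo, Set.mem_setOf_eq, hM0]
    constructor
    · intro hr
      rcases hMf : Mf r with _ | g
      · simp [hMf] at hr
      · simp only [hMf, Option.bind_some] at hr
        by_cases hg : r ∈ S g
        · rw [if_pos hg] at hr
          rw [← Option.some.inj hr]
          exact hg
        · rw [if_neg hg] at hr
          cases hr
    · intro hr
      have hsub : r ∈ HRLQ.matchedTo Mf h := hS1 h hr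
      simp only [HRLQ.matchedTo, Set.mem_setOf_eq] at hsub
      simp [hsub, hr]
  have hE0 : ∀ r h, M0 r = some h → I.E r h := by
    intro r h hr
    rcases hMf : Mf r with _ | g
    · simp [hM0, hMf] at hr
    · simp only [hM0, hMf, Option.bind_some] at hr
      by_cases hg : r ∈ S g
      · rw [if_pos hg] at hr
        rw [← Option.some.inj hr]
        exact hMfmatch.1 r g hMf
      · rw [if_neg hg] at hr
        cases hr
  have hcard0 : ∀ h, (HRLQ.matchedTo M0 h).ncard = I.lq h := by
    intro h
    rw [hmt h, hS2 h]
  exact I.main_aux hstrict hlu _ M0 hE0 hcard0 rfl
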